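/- For every matroid M of positive rank, the coefficient of t in P_M(t) equals the number of coatoms of the lattice of flats of M minus the number of atoms. -/

import Mathlib

open Polynomial Finset

/-- A "pre-matroid": a finite ground set together with a rank function.
It is a matroid when `IsMatroid` holds. -/
structure PreMatroid (α : Type*) where
  E : Finset α
  r : Finset α → ℕ

namespace PreMatroid

variable {α : Type*} [DecidableEq α]

/-- The rank axioms for a rank function on the ground set `E`, extended to all finite
sets by `r A = r (A ∩ E)`. -/
def IsMatroid (M : PreMatroid α) : Prop :=
  M.r ∅ = 0 ∧ (∀ A, M.r A ≤ A.card) ∧ (∀ A B, A ⊆ B → M.r A ≤ M.r B) ∧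
    (∀ A B, M.r (A ∪ B) + M.r (A ∩ B) ≤ M.r A + M.r B) ∧ (∀ A, M.r (A ∩ M.E) = M.r A)

/-- The rank of a matroid. -/
def rk (M : PreMatroid α) : ℕ := M.r M.E

/-- The flats of a matroid: subsets of the ground set such that adding any new element of the
ground set increases the rank. -/
def flats (M : PreMatroid α) : Finset (Finset α) :=
  M.E.powerset.filter fun F => ∀ e ∈ M.E, e ∉ F → M.r F < M.r (insert e F)

theorem subset_of_mem_flats {M : PreMatroid α} {F : Finset α} (hF : F ∈ M.flats) : F ⊆ M.E :=
  mem_powerset.mp (mem_filter.mp hF).1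

/-- The Möbius function `μ(∅̂, F)` of the lattice of flats, where `∅̂` is the minimal flat:
`μ = 1` on the minimal flat, and on any other flat `F` it is minus the sum of the values of `μ`
on all flats strictly contained in `F`. -/
def mu (M : PreMatroid α) (F : Finset α) : ℤ :=
  if (M.flats.filter fun G => G ⊂ F).Nonempty then
    -∑ G ∈ (M.flats.filter fun G => G ⊂ F).attach, M.mu G.1
  else 1
termination_by F.card
decreasing_by exact Finset.card_lt_card (Finset.mem_filter.mp G.2).2

/-- The characteristic polynomial `χ_M(t) = ∑_{F ∈ L(M)} μ(∅̂,F) t^{rk M - rk F}`. -/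
noncomputable def charPoly (M : PreMatroid α) : Polynomial ℤ :=
  ∑ F ∈ M.flats, Polynomial.C (M.mu F) * Polynomial.X ^ (M.rk - M.r F)

/-- The localization `M_F`: the restriction of `M` to the flat `F`. -/
def loc (M : PreMatroid α) (F : Finset α) : PreMatroid α :=
  ⟨F, fun A => M.r (A ∩ F)⟩

/-- The contraction (restriction) `M^F` of `M` at the flat `F`, with ground set `E ∖ F` and
rank function `A ↦ r (A ∪ F) - r F`. -/
def con (M : PreMatroid α) (F : Finset α) : PreMatroid α :=
  ⟨M.E \ F, fun A => M.r ((A ∩ (M.E \ F)) ∪ F) - M.r F⟩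

theorem IsMatroid.con {M : PreMatroid α} (h : M.IsMatroid) {F : Finset α} (hF : F ⊆ M.E) :
    (M.con F).IsMatroid := by
  obtain ⟨h0, hle, hmono, hsub, hcomp⟩ := h
  refine ⟨?_, ?_, ?_, ?_, ?_⟩
  · show M.r ((∅ ∩ (M.E \ F)) ∪ F) - M.r F = 0
    simp
  · intro A
    show M.r ((A ∩ (M.E \ F)) ∪ F) - M.r F ≤ A.card
    have h1 := hsub (A ∩ (M.E \ F)) F
    have h2 := hle (A ∩ (M.E \ F))
    have h3 : (A ∩ (M.E \ F)).card ≤ A.card := card_le_card inter_subset_left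
    omega
  · intro A B hAB
    show M.r ((A ∩ (M.E \ F)) ∪ F) - M.r F ≤ M.r ((B ∩ (M.E \ F)) ∪ F) - M.r F
    have : (A ∩ (M.E \ F)) ∪ F ⊆ (B ∩ (M.E \ F)) ∪ F :=
      union_subset_union (inter_subset_inter hAB (Finset.Subset.refl _)) (Finset.Subset.refl _)
    exact Nat.sub_le_sub_right (hmono _ _ this) _
  · intro A B
    set D := M.E \ F with hD
    show M.r (((A ∪ B) ∩ D) ∪ F) - M.r F + (M.r (((A ∩ B) ∩ D) ∪ F) - M.r F) ≤
      M.r ((A ∩ D) ∪ F) - M.r F + (M.r ((B ∩ D) ∪ F) - M.r F)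
    have e1 : (A ∪ B) ∩ D ∪ F = ((A ∩ D) ∪ F) ∪ ((B ∩ D) ∪ F) := by
      ext x; simp; tauto
    have e2 : (A ∩ B) ∩ D ∪ F = ((A ∩ D) ∪ F) ∩ ((B ∩ D) ∪ F) := by
      ext x; simp; tauto
    have key := hsub ((A ∩ D) ∪ F) ((B ∩ D) ∪ F)
    have m1 := hmono F ((A ∩ D) ∪ F) subset_union_right
    have m2 := hmono F ((B ∩ D) ∪ F) subset_union_right
    have m3 := hmono F ((A ∪ B) ∩ D ∪ F) subset_union_right
    have m4 := hmono F ((A ∩ B) ∩ D ∪ F) subset_union_right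
    rw [← e1, ← e2] at key
    omega
  · intro A
    show M.r ((A ∩ (M.E \ F) ∩ (M.E \ F)) ∪ F) - M.r F = M.r ((A ∩ (M.E \ F)) ∪ F) - M.r F
    rw [inter_assoc, inter_self]

/-- The minimal flat: the set of loops. -/
def bot (M : PreMatroid α) : Finset α := M.E.filter fun e => M.r {e} = 0

theorem IsMatroid.r_eq_zero_of_subset_bot {M : PreMatroid α} (h : M.IsMatroid) :
    ∀ A ⊆ M.bot, M.r A = 0 := by
  obtain ⟨h0, hle, hmono, hsub, hcomp⟩ := h
  intro A
  induction A using Finset.induction_on with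
  | empty => intro _; exact h0
  | @insert a A ha ih =>
    intro hA
    have haL : a ∈ M.bot := hA (mem_insert_self a A)
    have h1 : M.r {a} = 0 := (mem_filter.mp haL).2
    have h2 : M.r A = 0 := ih (fun x hx => hA (mem_insert_of_mem hx))
    have h3 := hsub {a} A
    have : insert a A = {a} ∪ A := by rw [insert_eq]
    rw [this]
    omega

theorem IsMatroid.r_bot {M : PreMatroid α} (h : M.IsMatroid) : M.r M.bot = 0 :=
  h.r_eq_zero_of_subset_bot _ (Finset.Subset.refl _)

theorem IsMatroid.bot_mem_flats {M : PreMatroid α} (h : M.IsMatroid) : M.bot ∈ M.flats := by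
  refine mem_filter.mpr ⟨mem_powerset.mpr (filter_subset _ _), ?_⟩
  intro e he hne
  rw [h.r_bot]
  rcases Nat.eq_zero_or_pos (M.r (insert e M.bot)) with h0 | h0
  · exfalso
    apply hne
    have : M.r {e} = 0 := by
      have := h.2.2.1 {e} (insert e M.bot) (singleton_subset_iff.mpr (mem_insert_self _ _))
      omega
    exact mem_filter.mpr ⟨he, this⟩
  · exact h0

theorem IsMatroid.bot_subset {M : PreMatroid α} (h : M.IsMatroid) {F : Finset α}
    (hF : F ∈ M.flats) : M.bot ⊆ F := by
  intro e he
  by_contra hne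
  have heE : e ∈ M.E := (mem_filter.mp he).1
  have h1 : M.r {e} = 0 := (mem_filter.mp he).2
  have hflat := (mem_filter.mp hF).2 e heE hne
  have h3 := h.2.2.2.1 {e} F
  have : insert e F = {e} ∪ F := by rw [insert_eq]
  rw [this] at hflat
  omega

theorem IsMatroid.eq_bot {M : PreMatroid α} (h : M.IsMatroid) {F : Finset α}
    (hF : F ∈ M.flats) (h0 : M.r F = 0) : F = M.bot := by
  refine Finset.Subset.antisymm ?_ (h.bot_subset hF)
  intro e he
  refine mem_filter.mpr ⟨subset_of_mem_flats hF he, ?_⟩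
  have := h.2.2.1 {e} F (singleton_subset_iff.mpr he)
  omega

theorem IsMatroid.filter_rank_zero {M : PreMatroid α} (h : M.IsMatroid) :
    M.flats.filter (fun F => M.r F = 0) = {M.bot} := by
  ext F
  simp only [mem_filter, mem_singleton]
  constructor
  · rintro ⟨hF, h0⟩; exact h.eq_bot hF h0
  · rintro rfl; exact ⟨h.bot_mem_flats, h.r_bot⟩

theorem IsMatroid.E_mem_flats {M : PreMatroid α} (h : M.IsMatroid) : M.E ∈ M.flats :=
  mem_filter.mpr ⟨mem_powerset.mpr (Finset.Subset.refl _), fun e he hne => absurd he hne⟩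

theorem IsMatroid.r_le_rk {M : PreMatroid α} (h : M.IsMatroid) {F : Finset α}
    (hF : F ∈ M.flats) : M.r F ≤ M.rk :=
  h.2.2.1 _ _ (subset_of_mem_flats hF)

theorem IsMatroid.eq_E {M : PreMatroid α} (h : M.IsMatroid) {F : Finset α}
    (hF : F ∈ M.flats) (hr : M.r F = M.rk) : F = M.E := by
  refine Finset.Subset.antisymm (subset_of_mem_flats hF) ?_
  intro e he
  by_contra hne
  have hflat := (mem_filter.mp hF).2 e he hne
  have : M.r (insert e F) ≤ M.rk :=
    h.2.2.1 _ _ (insert_subset he (subset_of_mem_flats hF))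
  omega

theorem IsMatroid.r_lt_of_ssubset {M : PreMatroid α} (h : M.IsMatroid) {F G : Finset α}
    (hF : F ∈ M.flats) (hG : G ∈ M.flats) (hss : G ⊂ F) : M.r G < M.r F := by
  obtain ⟨e, heF, heG⟩ := Finset.exists_of_ssubset hss
  have h1 := (mem_filter.mp hG).2 e (subset_of_mem_flats hF heF) heG
  have h2 : M.r (insert e G) ≤ M.r F :=
    h.2.2.1 _ _ (insert_subset heF hss.subset)
  omega

theorem IsMatroid.mu_bot {M : PreMatroid α} (h : M.IsMatroid) : M.mu M.bot = 1 := by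
  rw [mu, if_neg]
  rintro ⟨G, hG⟩
  obtain ⟨hGf, hGlt⟩ := mem_filter.mp hG
  exact hGlt.not_subset (h.bot_subset hGf)

theorem IsMatroid.mu_atom {M : PreMatroid α} (h : M.IsMatroid) {F : Finset α}
    (hF : F ∈ M.flats) (h1 : M.r F = 1) : M.mu F = -1 := by
  have hfilt : M.flats.filter (fun G => G ⊂ F) = {M.bot} := by
    ext G
    simp only [mem_filter, mem_singleton]
    constructor
    · rintro ⟨hGf, hGF⟩
      have := h.r_lt_of_ssubset hF hGf hGF
      exact h.eq_bot hGf (by omega)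
    · rintro rfl
      refine ⟨h.bot_mem_flats, Finset.ssubset_iff_subset_ne.mpr ⟨h.bot_subset hF, ?_⟩⟩
      intro hbe
      rw [← hbe, h.r_bot] at h1
      exact absurd h1 one_ne_zero.symm
  rw [mu, hfilt, if_pos (singleton_nonempty _), Finset.sum_attach ({M.bot}) M.mu,
    sum_singleton, h.mu_bot]

theorem charPoly_coeff (M : PreMatroid α) (k : ℕ) :
    M.charPoly.coeff k = ∑ F ∈ M.flats.filter (fun F => M.rk - M.r F = k), M.mu F := by
  rw [charPoly, Polynomial.finset_sum_coeff, Finset.sum_filter]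
  refine Finset.sum_congr rfl fun F _ => ?_
  rw [Polynomial.coeff_C_mul, Polynomial.coeff_X_pow]
  by_cases hk : M.rk - M.r F = k
  · simp [hk]
  · simp [hk, Ne.symm hk]

theorem natDegree_charPoly_le (M : PreMatroid α) : M.charPoly.natDegree ≤ M.rk := by
  refine Polynomial.natDegree_sum_le_of_forall_le _ _ fun F _ => ?_
  refine (Polynomial.natDegree_C_mul_le _ _).trans ?_
  rw [Polynomial.natDegree_X_pow]
  exact Nat.sub_le _ _

theorem IsMatroid.charPoly_coeff_rk {M : PreMatroid α} (h : M.IsMatroid) :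
    M.charPoly.coeff M.rk = 1 := by
  rw [charPoly_coeff]
  have : M.flats.filter (fun F => M.rk - M.r F = M.rk) = M.flats.filter (fun F => M.r F = 0) :=
    Finset.filter_congr fun F hF => by have := h.r_le_rk hF; omega
  rw [this, h.filter_rank_zero, sum_singleton, h.mu_bot]

theorem IsMatroid.charPoly_coeff_atoms {M : PreMatroid α} (h : M.IsMatroid) (hrk : 0 < M.rk) :
    M.charPoly.coeff (M.rk - 1) = -((M.flats.filter fun F => M.r F = 1).card : ℤ) := by
  rw [charPoly_coeff]
  have : M.flats.filter (fun F => M.rk - M.r F = M.rk - 1)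
      = M.flats.filter (fun F => M.r F = 1) :=
    Finset.filter_congr fun F hF => by have := h.r_le_rk hF; omega
  rw [this]
  rw [Finset.sum_congr rfl fun F hF => h.mu_atom (mem_filter.mp hF).1 (mem_filter.mp hF).2]
  simp

theorem IsMatroid.loc {M : PreMatroid α} (h : M.IsMatroid) (F : Finset α) :
    (M.loc F).IsMatroid := by
  obtain ⟨h0, hle, hmono, hsub, hcomp⟩ := h
  refine ⟨?_, ?_, ?_, ?_, ?_⟩
  · show M.r (∅ ∩ F) = 0
    rw [empty_inter]; exact h0
  · intro A
    exact (hle _).trans (card_le_card inter_subset_left)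
  · intro A B hAB
    exact hmono _ _ (inter_subset_inter hAB (Finset.Subset.refl _))
  · intro A B
    show M.r ((A ∪ B) ∩ F) + M.r ((A ∩ B) ∩ F) ≤ M.r (A ∩ F) + M.r (B ∩ F)
    have e1 : (A ∪ B) ∩ F = (A ∩ F) ∪ (B ∩ F) := by
      ext x; simp only [mem_inter, mem_union]; tauto
    have e2 : (A ∩ B) ∩ F = (A ∩ F) ∩ (B ∩ F) := by
      ext x; simp only [mem_inter]; tauto
    rw [e1, e2]
    exact hsub _ _
  · intro A
    show M.r ((A ∩ F) ∩ F) = M.r (A ∩ F)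
    rw [inter_assoc, inter_self]

theorem rk_loc (M : PreMatroid α) (F : Finset α) : (M.loc F).rk = M.r F := by
  show M.r (F ∩ F) = M.r F
  rw [inter_self]

theorem IsMatroid.rk_con {M : PreMatroid α} (h : M.IsMatroid) {F : Finset α} (hF : F ⊆ M.E) :
    (M.con F).rk = M.rk - M.r F := by
  show M.r (((M.E \ F) ∩ (M.E \ F)) ∪ F) - M.r F = M.r M.E - M.r F
  rw [inter_self, Finset.sdiff_union_of_subset hF]

theorem IsMatroid.loc_E {M : PreMatroid α} (h : M.IsMatroid) : M.loc M.E = M := by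
  obtain ⟨E, r⟩ := M
  simp only [PreMatroid.loc, mk.injEq, true_and]
  funext A
  exact h.2.2.2.2 A

end PreMatroid

/-- The type of assignments, to each matroid (on any ground type), of a polynomial. -/
def KLfun : Type 1 := ∀ (α : Type) [DecidableEq α] (M : PreMatroid α), M.IsMatroid → Polynomial ℤ

/-- The defining conditions of the Kazhdan-Lusztig polynomial of a matroid:
`P_M = 1` in rank zero, `deg P_M < (rk M)/2` in positive rank, and the defining recursion
`t^{rk M} P_M(1/t) = ∑_{F ∈ L(M)} χ_{M_F}(t) P_{M^F}(t)`. -/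
def KLconds (P : KLfun) : Prop :=
  ∀ (α : Type) [DecidableEq α] (M : PreMatroid α) (h : M.IsMatroid),
    (M.rk = 0 → P α M h = 1) ∧
    (0 < M.rk → 2 * (P α M h).natDegree < M.rk) ∧
    ((P α M h).reflect M.rk =
      ∑ F ∈ M.flats.attach, (M.loc F.1).charPoly *
        P α (M.con F.1) (h.con (PreMatroid.subset_of_mem_flats F.2)))

open PreMatroid in
theorem kl_coeff_zero (P : KLfun) (hP : KLconds P) (α : Type) [DecidableEq α]
    (M : PreMatroid α) (h : M.IsMatroid) : (P α M h).coeff 0 = 1 := by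
  obtain ⟨h1, h2, h3⟩ := hP α M h
  rcases Nat.eq_zero_or_pos M.rk with h0 | hpos
  · rw [h1 h0, Polynomial.coeff_one_zero]
  · have hc : ((P α M h).reflect M.rk).coeff M.rk
        = (∑ F ∈ M.flats.attach, (M.loc F.1).charPoly *
            P α (M.con F.1) (h.con (PreMatroid.subset_of_mem_flats F.2))).coeff M.rk := by
      rw [h3]
    rw [Polynomial.coeff_reflect, Polynomial.revAt_le (le_refl _), Nat.sub_self,
      Polynomial.finset_sum_coeff] at hc
    rw [hc]
    rw [Finset.sum_eq_single_of_mem ⟨M.E, h.E_mem_flats⟩ (mem_attach _ _)]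
    · have hrkcon : (M.con M.E).rk = 0 := by
        rw [h.rk_con (Finset.Subset.refl _)]
        exact Nat.sub_self _
      rw [(hP α (M.con M.E) _).1 hrkcon, mul_one, h.loc_E, h.charPoly_coeff_rk]
    · intro b _ hb
      have hbE : b.1 ≠ M.E := fun hh => hb (Subtype.ext hh)
      have hble : M.r b.1 ≤ M.rk := h.r_le_rk b.2
      have hblt : M.r b.1 < M.rk := by
        rcases lt_or_eq_of_le hble with hlt | heq
        · exact hlt
        · exact absurd (h.eq_E b.2 heq) hbE
      have hrkcon : (M.con b.1).rk = M.rk - M.r b.1 :=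
        h.rk_con (PreMatroid.subset_of_mem_flats b.2)
      have hdeg := (hP α (M.con b.1) (h.con (PreMatroid.subset_of_mem_flats b.2))).2.1
        (by omega)
      rw [hrkcon] at hdeg
      refine Polynomial.coeff_eq_zero_of_natDegree_lt (lt_of_le_of_lt
        (Polynomial.natDegree_mul_le) ?_)
      have hχ : (M.loc b.1).charPoly.natDegree ≤ M.r b.1 := by
        have := natDegree_charPoly_le (M.loc b.1)
        rwa [rk_loc] at this
      omega

/-- For every matroid `M` of positive rank, the coefficient of `t` in
`P_M(t)` equals the number of coatoms of the lattice of flats (flats of rank `rk M - 1`)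
minus the number of atoms (flats of rank `1`). -/
theorem kl_linear_term (P : KLfun) (hP : KLconds P)
    (α : Type) [DecidableEq α] (M : PreMatroid α) (h : M.IsMatroid) (hrk : 0 < M.rk) :
    (P α M h).coeff 1 =
      ((M.flats.filter fun F => M.r F = M.rk - 1).card : ℤ) -
        ((M.flats.filter fun F => M.r F = 1).card : ℤ) := by
  classical
  obtain ⟨-, -, h3⟩ := hP α M h
  set a : ℤ := ((M.flats.filter fun F => M.r F = 1).card : ℤ) with ha
  have key : ∀ (F : Finset α) (hF : F ∈ M.flats) (hc : (M.con F).IsMatroid),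
      ((M.loc F).charPoly * P α (M.con F) hc).coeff (M.rk - 1)
        = (if M.r F = M.rk - 1 then (1 : ℤ) else 0)
          + (if M.r F = M.rk then -a else 0) := by
    intro F hF hc
    have hFE : F ⊆ M.E := PreMatroid.subset_of_mem_flats hF
    have hle : M.r F ≤ M.rk := h.r_le_rk hF
    have hrkcon : (M.con F).rk = M.rk - M.r F := h.rk_con hFE
    by_cases hcase1 : M.r F = M.rk
    · -- F = E
      have hEq : F = M.E := h.eq_E hF hcase1
      subst hEq
      have hrk0 : (M.con M.E).rk = 0 := by omega
      rw [(hP α (M.con M.E) hc).1 hrk0, mul_one, h.loc_E, h.charPoly_coeff_atoms hrk]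
      rw [if_neg (by omega), if_pos hcase1]
      simp [ha]
    · by_cases hcase2 : M.r F = M.rk - 1
      · -- coatom
        have hrk1 : (M.con F).rk = 1 := by omega
        have hdeg := (hP α (M.con F) hc).2.1 (by omega)
        rw [hrk1] at hdeg
        have hnd : (P α (M.con F) hc).natDegree = 0 := by omega
        have hP1 : P α (M.con F) hc = 1 := by
          rw [Polynomial.eq_C_of_natDegree_eq_zero hnd,
            kl_coeff_zero P hP α (M.con F) hc, map_one]
        rw [hP1, mul_one]
        have hlocm := h.loc F
        have hcoef : (M.loc F).charPoly.coeff ((M.loc F).rk) = 1 := hlocm.charPoly_coeff_rk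
        rw [PreMatroid.rk_loc, hcase2] at hcoef
        rw [hcoef, if_pos hcase2, if_neg hcase1, add_zero]
      · -- corank at least 2
        have hcor : M.r F + 2 ≤ M.rk := by omega
        have hdeg := (hP α (M.con F) hc).2.1 (by omega)
        rw [hrkcon] at hdeg
        rw [if_neg hcase2, if_neg hcase1, add_zero]
        refine Polynomial.coeff_eq_zero_of_natDegree_lt (lt_of_le_of_lt
          (Polynomial.natDegree_mul_le) ?_)
        have hχ : (M.loc F).charPoly.natDegree ≤ M.r F := by
          have := PreMatroid.natDegree_charPoly_le (M.loc F)
          rwa [PreMatroid.rk_loc] at this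
        omega
  have hc : ((P α M h).reflect M.rk).coeff (M.rk - 1)
      = (∑ F ∈ M.flats.attach, (M.loc F.1).charPoly *
          P α (M.con F.1) (h.con (PreMatroid.subset_of_mem_flats F.2))).coeff (M.rk - 1) := by
    rw [h3]
  rw [Polynomial.coeff_reflect, Polynomial.revAt_le (Nat.sub_le _ _),
    Nat.sub_sub_self hrk, Polynomial.finset_sum_coeff] at hc
  rw [hc, Finset.sum_congr rfl fun F _ => key F.1 F.2 _]
  rw [Finset.sum_attach M.flats (fun F => (if M.r F = M.rk - 1 then (1 : ℤ) else 0)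
    + (if M.r F = M.rk then -a else 0))]
  rw [Finset.sum_add_distrib, ← Finset.sum_filter, ← Finset.sum_filter]
  have hEfilt : M.flats.filter (fun F => M.r F = M.rk) = {M.E} := by
    ext F
    simp only [mem_filter, mem_singleton]
    constructor
    · rintro ⟨hF, hr⟩; exact h.eq_E hF hr
    · rintro rfl; exact ⟨h.E_mem_flats, rfl⟩
  rw [hEfilt]
  simp [sub_eq_add_neg]
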